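/- arXiv:0808.1129 — 3 statements merged into one kernel-verified Lean document; each statement's English description precedes it below -/
import Mathlib

section
/- Let p be an odd prime, V a vector space over 𝔽_p, W a one-dimensional 𝔽_p-vector space, and [·,·] : V × V → W an alternating bilinear form (bilinear with [x,x] = 0 for all x ∈ V). Then for all a, b, c, d in V with [a,b] = [c,d], there exist x and y in V such that [a,b] = [x,b], [x,b] = [x,y], [x,y] = [c,y], and [c,y] = [c,d]. -/
private lemma aux_solve {K : Type*} [Field K] {V : Type*} [AddCommGroup V] [Module K V]
    (f g : V →ₗ[K] K)
    (hind : ∀ μ ν : K, (∀ v, μ * f v + ν * g v = 0) → μ = 0 ∧ ν = 0) (w : K) :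
    ∃ y : V, f y = w ∧ g y = w := by
  by_cases hdet : ∀ u v, f u * g v = f v * g u
  · exfalso
    obtain ⟨u, hu⟩ : ∃ u, f u ≠ 0 := by
      by_contra hc
      push_neg at hc
      exact one_ne_zero (hind 1 0 (fun v => by simp [hc v])).1
    have h2 := hind (g u) (-(f u)) (fun v => by linear_combination -hdet u v)
    exact hu (neg_eq_zero.mp h2.2)
  · push_neg at hdet
    obtain ⟨u, v, hD⟩ := hdet
    have hD' : f u * g v - f v * g u ≠ 0 := sub_ne_zero.mpr hD
    refine ⟨((w * g v - w * f v) / (f u * g v - f v * g u)) • u +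
            ((f u * w - g u * w) / (f u * g v - f v * g u)) • v, ?_, ?_⟩ <;>
      simp only [map_add, map_smul, smul_eq_mul] <;>
      rw [div_mul_eq_mul_div, div_mul_eq_mul_div, ← add_div, div_eq_iff hD'] <;> ring

/-- Condition (i) of the Claim in the proof of Lemma 6.6 (Tate's Prop. 4.5): for an
alternating bilinear form `B : V × V → W` on an `𝔽_p`-vector space `V` (p odd) with
one-dimensional target `W`, any two equal values `B a b = B c d` can be connected by a
chain `B a b = B x b = B x y = B c y = B c d`. -/
theorem stmt_1 (p : ℕ) (hp : p.Prime) (hodd : Odd p)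
    (V : Type*) [AddCommGroup V] [Module (ZMod p) V]
    (W : Type*) [AddCommGroup W] [Module (ZMod p) W]
    (hW : Module.finrank (ZMod p) W = 1)
    (B : V →ₗ[ZMod p] V →ₗ[ZMod p] W) (hB : ∀ x : V, B x x = 0)
    (a b c d : V) (h : B a b = B c d) :
    ∃ x y : V, B a b = B x b ∧ B x b = B x y ∧ B x y = B c y ∧ B c y = B c d := by
  haveI := Fact.mk hp
  by_cases hw0 : B a b = 0
  · exact ⟨0, 0, by simp [hw0], by simp, by simp [h ▸ hw0], by simp [← h, hw0]⟩
  · have hskew : ∀ x y : V, B x y = - B y x := by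
      intro x y
      have h1 : B (x + y) (x + y) = 0 := hB _
      simp only [map_add, LinearMap.add_apply, hB x, hB y, zero_add, add_zero] at h1
      exact eq_neg_of_add_eq_zero_right h1
    -- identify W with ZMod p
    let bW : Module.Basis Unit (ZMod p) W := Module.basisUnique Unit hW
    let e : W ≃ₗ[ZMod p] ZMod p :=
      bW.equivFun ≪≫ₗ LinearEquiv.funUnique Unit (ZMod p) (ZMod p)
    set w : ZMod p := e (B a b) with hw_def
    have hw : w ≠ 0 := fun hh => hw0 (by simpa using e.injective (hh.trans (map_zero e).symm))
    have hcd : e (B c d) = w := by rw [← h]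
    -- choose x with B x b = B a b and independence of the functionals e∘B x, e∘B c
    obtain ⟨x, hxb, hind⟩ : ∃ x : V, B x b = B a b ∧
        ∀ μ ν : ZMod p, (∀ v, μ * e (B x v) + ν * e (B c v) = 0) → μ = 0 ∧ ν = 0 := by
      by_cases hac : ∀ μ ν : ZMod p, (∀ v, μ * e (B a v) + ν * e (B c v) = 0) → μ = 0 ∧ ν = 0
      · exact ⟨a, rfl, hac⟩
      · push_neg at hac
        obtain ⟨μ, ν, hrel, hne⟩ := hac
        have hμ : μ ≠ 0 := by
          intro hμ0
          have hν : ν = 0 := by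
            have := hrel d
            rw [hμ0, hcd, zero_mul, zero_add] at this
            exact (mul_eq_zero.mp this).resolve_right hw
          exact hne hμ0 hν
        set lam : ZMod p := -ν / μ with hlam_def
        have hlam : ∀ v, e (B a v) = lam * e (B c v) := by
          intro v
          rw [hlam_def, div_mul_eq_mul_div, eq_div_iff hμ]
          linear_combination hrel v
        have hlamb : w = lam * e (B c b) := hlam b
        have hlam0 : lam ≠ 0 := fun h0 => hw (by rw [hlamb, h0, zero_mul])
        have hcb : e (B c b) ≠ 0 := fun h0 => hw (by rw [hlamb, h0, mul_zero])
        refine ⟨a + b, by simp [map_add, hB b], ?_⟩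
        intro α β hrel2
        have hab : ∀ v, e (B (a + b) v) = lam * e (B c v) + e (B b v) := by
          intro v
          rw [map_add, LinearMap.add_apply, map_add, hlam v]
        -- evaluate at b : get α*lam + β = 0
        have hstep1 : α * lam + β = 0 := by
          have hbb : e (B b b) = 0 := by rw [hB b, map_zero]
          have := hrel2 b
          rw [hab b, hbb] at this
          have h' : (α * lam + β) * e (B c b) = 0 := by linear_combination this
          exact (mul_eq_zero.mp h').resolve_right hcb
        -- evaluate at a : get α = 0
        have hca : e (B c a) = 0 := by
          have h0 : (0 : ZMod p) = lam * e (B c a) := by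
            have := hlam a; rwa [hB a, map_zero] at this
          exact (mul_eq_zero.mp h0.symm).resolve_left hlam0
        have hba : e (B b a) = -w := by
          rw [hskew b a, map_neg, hw_def]
        have hα : α = 0 := by
          have := hrel2 a
          rw [hab a, hca, hba] at this
          have h' : α * (-w) = 0 := by linear_combination this
          have := (mul_eq_zero.mp h').resolve_right (neg_ne_zero.mpr hw)
          exact this
        refine ⟨hα, by linear_combination hstep1 - lam * hα⟩
    -- now solve for y
    obtain ⟨y, hfy, hgy⟩ := aux_solve (e.toLinearMap.comp (B x)) (e.toLinearMap.comp (B c))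
      (by simpa using hind) w
    simp only [LinearMap.comp_apply, LinearEquiv.coe_coe] at hfy hgy
    have hxy : B x y = B a b := e.injective (by rw [hfy])
    have hcy : B c y = B a b := e.injective (by rw [hgy])
    exact ⟨x, y, hxb.symm, hxb.trans hxy.symm, hxy.trans hcy.symm, hcy.trans h⟩
end

section
/- Let p be an odd prime, V a vector space over 𝔽_p, W a one-dimensional 𝔽_p-vector space, and [·,·] : V × V → W an alternating bilinear form (bilinear with [x,x] = 0 for all x ∈ V). Then for all a₁, a₂, b₁, b₂ in V, there exist c₁, c₂ and d in V such that [a₁,b₁] = [c₁,d] and [a₂,b₂] = [c₂,d]. -/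
/-- Condition (ii) of the Claim in the proof of Lemma 6.6 (Tate's Prop. 4.5): for an
alternating bilinear form `B : V × V → W` on an `𝔽_p`-vector space `V` (p odd) with
one-dimensional target `W`, any two values `B a₁ b₁`, `B a₂ b₂` can be written as
`B c₁ d`, `B c₂ d` with a common `d`. -/
theorem stmt_2 (p : ℕ) (hp : p.Prime) (hodd : Odd p)
    (V : Type*) [AddCommGroup V] [Module (ZMod p) V]
    (W : Type*) [AddCommGroup W] [Module (ZMod p) W]
    (hW : Module.finrank (ZMod p) W = 1)
    (B : V →ₗ[ZMod p] V →ₗ[ZMod p] W) (hB : ∀ x : V, B x x = 0)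
    (a₁ a₂ b₁ b₂ : V) :
    ∃ c₁ c₂ d : V, B a₁ b₁ = B c₁ d ∧ B a₂ b₂ = B c₂ d := by
  haveI : Fact p.Prime := ⟨hp⟩
  by_cases h1 : B a₁ b₁ = 0
  · by_cases h2 : B a₂ b₂ = 0
    · exact ⟨0, 0, 0, by simp [h1, h2]⟩
    · -- B a₂ b₂ ≠ 0 spans W
      have hspan : Submodule.span (ZMod p) {B a₂ b₂} = ⊤ :=
        (finrank_eq_one_iff_of_nonzero (B a₂ b₂) h2).mp hW
      exact ⟨0, a₂, b₂, by simp [h1], rfl⟩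
  · have hspan : Submodule.span (ZMod p) {B a₁ b₁} = ⊤ :=
      (finrank_eq_one_iff_of_nonzero (B a₁ b₁) h1).mp hW
    have hmem : B a₂ b₂ ∈ Submodule.span (ZMod p) {B a₁ b₁} := hspan ▸ Submodule.mem_top
    obtain ⟨k, hk⟩ := Submodule.mem_span_singleton.mp hmem
    exact ⟨a₁, k • a₁, b₁, rfl, by simp [← hk]⟩
end

section
/- Let p be a prime and let C be a nontrivial subgroup of the multiplicative group (ℤ/pℤ)ˣ. Let H be the subgroup of GL₂(𝔽_p) consisting of all diagonal matrices diag(a, 1) with a ∈ C, let D be the subgroup of all invertible diagonal matrices in GL₂(𝔽_p), and let w be the Weyl element given by the matrix with rows (0, −1) and (1, 0). Then every element of GL₂(𝔽_p) that normalizes H is contained in the subgroup of GL₂(𝔽_p) generated by D and w. -/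
/-- The 'explicit calculation' in the proof of Lemma 4.0: for a nontrivial subgroup
`C ≤ 𝔽_pˣ`, the normalizer in `GL₂(𝔽_p)` of `H = { diag(a,1) : a ∈ C }` is contained in
the subgroup generated by the diagonal torus `D` and the Weyl element `w = [[0,-1],[1,0]]`. -/
theorem stmt_3 (p : ℕ) (hp : p.Prime)
    (C : Subgroup (ZMod p)ˣ) (hC : C ≠ ⊥)
    (H : Subgroup (Matrix.GeneralLinearGroup (Fin 2) (ZMod p)))
    (hH : ∀ M : Matrix.GeneralLinearGroup (Fin 2) (ZMod p),
      M ∈ H ↔ ∃ a ∈ C, (M : Matrix (Fin 2) (Fin 2) (ZMod p)) =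
        Matrix.diagonal ![(a : ZMod p), 1])
    (D : Subgroup (Matrix.GeneralLinearGroup (Fin 2) (ZMod p)))
    (hD : ∀ M : Matrix.GeneralLinearGroup (Fin 2) (ZMod p),
      M ∈ D ↔ (M : Matrix (Fin 2) (Fin 2) (ZMod p)).IsDiag)
    (w : Matrix.GeneralLinearGroup (Fin 2) (ZMod p))
    (hw : (w : Matrix (Fin 2) (Fin 2) (ZMod p)) = !![0, -1; 1, 0])
    (g : Matrix.GeneralLinearGroup (Fin 2) (ZMod p))
    (hg : g ∈ Subgroup.normalizer (H : Set (Matrix.GeneralLinearGroup (Fin 2) (ZMod p)))) :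
    g ∈ D ⊔ Subgroup.closure {w} := by
  haveI : Fact p.Prime := ⟨hp⟩
  -- pick a nontrivial element a of C
  rw [Subgroup.ne_bot_iff_exists_ne_one] at hC
  obtain ⟨⟨a, haC⟩, ha1⟩ := hC
  have ha1' : a ≠ 1 := fun h => ha1 (Subtype.ext h)
  have hav : (a : ZMod p) ≠ 1 := fun h => ha1' (Units.ext h)
  -- the element diag(a,1) of GL₂
  have hfun1 : (fun i => ![(a : ZMod p), 1] i * ![((a⁻¹ : (ZMod p)ˣ) : ZMod p), 1] i)
      = (1 : Fin 2 → ZMod p) := by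
    funext i; fin_cases i
    · exact a.mul_inv
    · exact mul_one 1
  have hfun2 : (fun i => ![((a⁻¹ : (ZMod p)ˣ) : ZMod p), 1] i * ![(a : ZMod p), 1] i)
      = (1 : Fin 2 → ZMod p) := by
    funext i; fin_cases i
    · exact a.inv_mul
    · exact mul_one 1
  have hinv1 : Matrix.diagonal ![(a : ZMod p), 1] *
      Matrix.diagonal ![((a⁻¹ : (ZMod p)ˣ) : ZMod p), 1] = 1 := by
    rw [Matrix.diagonal_mul_diagonal, hfun1]; exact Matrix.diagonal_one
  have hinv2 : Matrix.diagonal ![((a⁻¹ : (ZMod p)ˣ) : ZMod p), 1] *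
      Matrix.diagonal ![(a : ZMod p), 1] = 1 := by
    rw [Matrix.diagonal_mul_diagonal, hfun2]; exact Matrix.diagonal_one
  set M : Matrix.GeneralLinearGroup (Fin 2) (ZMod p) :=
    ⟨Matrix.diagonal ![(a : ZMod p), 1], Matrix.diagonal ![((a⁻¹ : (ZMod p)ˣ) : ZMod p), 1],
      hinv1, hinv2⟩ with hM
  have hMH : M ∈ H := (hH M).mpr ⟨a, haC, rfl⟩
  rw [Subgroup.mem_normalizer_iff] at hg
  obtain ⟨b, hbC, hb⟩ := (hH _).mp ((hg M).mp hMH)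
  -- key equation on matrices
  have key : Matrix.diagonal ![(b : ZMod p), 1] * (g : Matrix (Fin 2) (Fin 2) (ZMod p))
      = (g : Matrix (Fin 2) (Fin 2) (ZMod p)) * Matrix.diagonal ![(a : ZMod p), 1] := by
    have h1 : (g * M * g⁻¹) * g = g * M := by group
    calc Matrix.diagonal ![(b : ZMod p), 1] * (g : Matrix (Fin 2) (Fin 2) (ZMod p))
        = (((g * M * g⁻¹) : _) : Matrix (Fin 2) (Fin 2) (ZMod p)) * (g : Matrix (Fin 2) (Fin 2) (ZMod p)) := by rw [hb]
      _ = (((g * M * g⁻¹) * g : _) : Matrix (Fin 2) (Fin 2) (ZMod p)) := (Units.val_mul _ _).symm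
      _ = ((g * M : _) : Matrix (Fin 2) (Fin 2) (ZMod p)) := by rw [h1]
      _ = (g : Matrix (Fin 2) (Fin 2) (ZMod p)) * (M : Matrix (Fin 2) (Fin 2) (ZMod p)) := Units.val_mul _ _
      _ = (g : Matrix (Fin 2) (Fin 2) (ZMod p)) * Matrix.diagonal ![(a : ZMod p), 1] := rfl
  set A : Matrix (Fin 2) (Fin 2) (ZMod p) := (g : Matrix (Fin 2) (Fin 2) (ZMod p)) with hA
  have e10 : A 1 0 * (a : ZMod p) = A 1 0 := by
    have := congrFun (congrFun key 1) 0
    simpa [Matrix.mul_apply, Fin.sum_univ_two, Matrix.diagonal, mul_comm] using this.symm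
  have h10 : A 1 0 = 0 := by
    by_contra h
    exact hav (mul_left_cancel₀ h (by rw [mul_one]; exact e10))
  have e00 : (b : ZMod p) * A 0 0 = A 0 0 * (a : ZMod p) := by
    have := congrFun (congrFun key 0) 0
    simpa [Matrix.mul_apply, Fin.sum_univ_two, Matrix.diagonal] using this
  have e01 : (b : ZMod p) * A 0 1 = A 0 1 := by
    have := congrFun (congrFun key 0) 1
    simpa [Matrix.mul_apply, Fin.sum_univ_two, Matrix.diagonal] using this
  have h01 : A 0 1 = 0 := by
    by_contra h
    -- then b = 1, so A 0 0 * a = A 0 0 with A 0 0 ≠ 0 would force a = 1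
    have hb1 : (b : ZMod p) = 1 :=
      mul_right_cancel₀ h (e01.trans (one_mul (A 0 1)).symm)
    have hdet : IsUnit A.det := ⟨Matrix.GeneralLinearGroup.det g, rfl⟩
    have h00 : A 0 0 ≠ 0 := by
      intro h0
      rw [Matrix.det_fin_two, h0, h10] at hdet
      simp at hdet
    apply hav
    have : A 0 0 * (a : ZMod p) = A 0 0 * 1 := by
      rw [mul_one, ← e00, hb1, one_mul]
    exact mul_left_cancel₀ h00 this
  have : g ∈ D := by
    rw [hD]
    intro i j hij
    fin_cases i <;> fin_cases j <;>
      first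
        | exact absurd rfl hij
        | exact h01
        | exact h10
  exact Subgroup.mem_sup_left this
end
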